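/- Let n ≥ 1 and let P be the Z₂-crown of order n. Let Q be a finite dismantlable poset and let f : P → Q₁ be an order-preserving map which factors as f = h ∘ g with order-preserving maps g : P → Q and h : Q → Q₁. Then f̂(soi(P)) = 0 in ZMod2^{Q₁²}. -/

import Mathlib

/-! ### The poset `Q₁` (face poset of the 1-dimensional cross-polytope) -/

/-- The four elements `+0, -0, +1, -1` of `Q₁`. -/
inductive Q1 : Type
  | p0 | m0 | p1 | m1
deriving DecidableEq

instance instFintypeQ1 : Fintype Q1 :=
  ⟨{.p0, .m0, .p1, .m1}, by intro x; cases x <;> simp⟩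

/-- The level (`false` for `±0`, `true` for `±1`) of an element of `Q₁`. -/
def Q1.lvl : Q1 → Bool
  | .p0 => false | .m0 => false | .p1 => true | .m1 => true

/-- The order on `Q₁`: `±0 < ±1` (all four strict relations). -/
instance : PartialOrder Q1 where
  le x y := x = y ∨ (x.lvl = false ∧ y.lvl = true)
  le_refl x := Or.inl rfl
  le_trans x y z hxy hyz := by
    rcases hxy with rfl | ⟨h1, h2⟩
    · exact hyz
    rcases hyz with rfl | ⟨h3, h4⟩
    · exact Or.inr ⟨h1, h2⟩
    · rw [h2] at h3; exact absurd h3 (by simp)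
  le_antisymm x y hxy hyx := by
    rcases hxy with rfl | ⟨h1, h2⟩
    · rfl
    rcases hyx with rfl | ⟨h3, h4⟩
    · rfl
    · rw [h2] at h3; exact absurd h3 (by simp)

/-- The involution of `Q₁`, swapping `+x` and `-x`. -/
def q1inv : Q1 → Q1
  | .p0 => .m0 | .m0 => .p0 | .p1 => .m1 | .m1 => .p1

/-! ### The `Z₂`-crown of order `n` -/

/-- The `Z₂`-crown of order `n` has element set `ZMod (4n)`. -/
abbrev Crown (n : ℕ) : Type := ZMod (4 * n)

instance (n : ℕ) [NeZero n] : NeZero (4 * n) := ⟨by have := NeZero.ne n; omega⟩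

private lemma crown_parity {n : ℕ} [NeZero n] (x : ZMod (4 * n)) :
    (x + 1).val % 2 = (x.val + 1) % 2 := by
  haveI : Fact (1 < 4 * n) := ⟨by have := NeZero.ne n; omega⟩
  rw [ZMod.val_add, ZMod.val_one, Nat.mod_mod_of_dvd _ ⟨2 * n, by ring⟩]

/-- The order on the crown, generated by `e < e + 1` and `e < e - 1` for even `e`. -/
instance crownPO (n : ℕ) [NeZero n] : PartialOrder (Crown n) where
  le x y := x = y ∨ (Even x.val ∧ (y = x + 1 ∨ y = x - 1))
  le_refl x := Or.inl rfl
  le_trans x y z hxy hyz := by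
    rcases hxy with rfl | ⟨hex, hy⟩
    · exact hyz
    rcases hyz with rfl | ⟨hey, hz⟩
    · exact Or.inr ⟨hex, hy⟩
    · exfalso
      rcases hy with rfl | rfl
      · have h := crown_parity x
        rw [Nat.even_iff] at hex hey; omega
      · have e : x - 1 + 1 = x := by ring
        have h := crown_parity (x - 1)
        rw [e] at h
        rw [Nat.even_iff] at hex hey; omega
  le_antisymm x y hxy hyx := by
    rcases hxy with rfl | ⟨hex, hy⟩
    · rfl
    rcases hyx with rfl | ⟨hey, hx⟩
    · rfl
    · exfalso
      rcases hy with rfl | rfl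
      · have h := crown_parity x
        rw [Nat.even_iff] at hex hey; omega
      · have e : x - 1 + 1 = x := by ring
        have h := crown_parity (x - 1)
        rw [e] at h
        rw [Nat.even_iff] at hex hey; omega

/-! ### The vector space `ZMod2^{P²}` with its strict order indicator -/

/-- Ordered pairs `(x,y)` with `x ≤ y` of a poset: the basis of `ZMod2^{P²}`. -/
abbrev OPairs (P : Type) [PartialOrder P] : Type := {p : P × P // p.1 ≤ p.2}

/-- The `ZMod 2`-vector space with basis the ordered pairs of `P`. -/
abbrev VS (P : Type) [PartialOrder P] := OPairs P →₀ ZMod 2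

open scoped Classical in
/-- The strict order indicator: the sum of the basis elements `(x,y)` with `x < y`. -/
noncomputable def soi (P : Type) [PartialOrder P] [Finite P] : VS P :=
  letI : Fintype (OPairs P) := Fintype.ofFinite _
  ∑ p : OPairs P, if p.val.1 < p.val.2 then Finsupp.single p 1 else 0

open scoped Classical in
/-- The sum of the basis elements `(x,y)` with `x < y` and `x, y ∈ S`. -/
noncomputable def soiOn {P : Type} [PartialOrder P] [Finite P] (S : Set P) : VS P :=
  letI : Fintype (OPairs P) := Fintype.ofFinite _
  ∑ p : OPairs P,
    if p.val.1 ∈ S ∧ p.val.2 ∈ S ∧ p.val.1 < p.val.2 then Finsupp.single p 1 else 0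

/-- The linear map `f̂` induced by a monotone map, sending the basis element `(x,y)`
to `(f x, f y)`. -/
noncomputable def fhat {P Q : Type} [PartialOrder P] [PartialOrder Q] {f : P → Q}
    (hf : Monotone f) : VS P →ₗ[ZMod 2] VS Q :=
  Finsupp.lmapDomain (ZMod 2) (ZMod 2) (fun p => ⟨(f p.val.1, f p.val.2), hf p.prop⟩)

/-- `p` is dominated by `q` within the subposet `S`. -/
def DomIn {α : Type} [PartialOrder α] (S : Set α) (p q : α) : Prop :=
  p ∈ S ∧ q ∈ S ∧ p ≠ q ∧ (p ≤ q ∨ q ≤ p) ∧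
    ∀ x ∈ S, x ≠ p → x ≠ q → (x < p → x < q) ∧ (p < x → q < x)

/-- `Reduces S T`: the subposet `S` can be reduced to the subposet `T` by successively
deleting dominated elements. -/
inductive Reduces {α : Type} [PartialOrder α] : Set α → Set α → Prop
  | refl (S : Set α) : Reduces S S
  | step {S T : Set α} (p q : α) (h : DomIn S p q) (hr : Reduces (S \ {p}) T) : Reduces S T

/-- A poset is dismantlable if it reduces to a one-element subposet by successively
deleting dominated elements. -/
def Dismantlable (α : Type) [PartialOrder α] : Prop :=
  ∃ x : α, Reduces (Set.univ : Set α) {x}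


/-! ### Auxiliary development -/

section Aux
variable {n : ℕ} [NeZero n]

private lemma four_n_big : 2 < 4 * n := by have := NeZero.ne n; omega

private lemma c_one_ne_zero : (1 : ZMod (4 * n)) ≠ 0 := by
  intro hcon
  have h : ((1 : ℕ) : ZMod (4 * n)).val = 1 := ZMod.val_cast_of_lt (by have := NeZero.ne n; omega)
  rw [Nat.cast_one, hcon, ZMod.val_zero] at h
  omega

private lemma c_two_ne_zero : (2 : ZMod (4 * n)) ≠ 0 := by
  intro hcon
  have h : ((2 : ℕ) : ZMod (4 * n)).val = 2 := ZMod.val_cast_of_lt (by have := NeZero.ne n; omega)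
  rw [Nat.cast_ofNat, hcon, ZMod.val_zero] at h
  omega

private lemma csucc_ne_self (x : Crown n) : x + 1 ≠ x := by
  intro hcon
  exact c_one_ne_zero (by linear_combination hcon)

private lemma cpred_ne_self (x : Crown n) : x - 1 ≠ x := by
  intro hcon
  exact c_one_ne_zero (by linear_combination -hcon)

private lemma succ_ne_pred (x : Crown n) : x + 1 ≠ x - 1 := by
  intro hcon
  exact c_two_ne_zero (by linear_combination hcon)

private lemma sub_two_ne_self (x : Crown n) : x - 2 ≠ x := by
  intro hcon
  exact c_two_ne_zero (by linear_combination -hcon)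

private lemma add_two_ne_self (x : Crown n) : x + 2 ≠ x := by
  intro hcon
  exact c_two_ne_zero (by linear_combination hcon)

private lemma even_succ_iff (x : Crown n) : Even (x + 1).val ↔ ¬ Even x.val := by
  have h := crown_parity x
  rw [Nat.even_iff, Nat.even_iff]
  omega

private lemma even_pred_iff (x : Crown n) : Even (x - 1).val ↔ ¬ Even x.val := by
  have h := even_succ_iff (x - 1)
  rw [sub_add_cancel] at h
  by_cases he : Even x.val
  · simp [he] at h ⊢
    exact h
  · simp [he] at h ⊢
    exact h

private lemma crown_le_def (x y : Crown n) :
    x ≤ y ↔ (x = y ∨ (Even x.val ∧ (y = x + 1 ∨ y = x - 1))) := Iff.rfl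

private lemma crown_lt_iff (x y : Crown n) :
    x < y ↔ Even x.val ∧ (y = x + 1 ∨ y = x - 1) := by
  rw [lt_iff_le_and_ne, crown_le_def]
  constructor
  · rintro ⟨(rfl | h), hne⟩
    · exact absurd rfl hne
    · exact h
  · rintro ⟨he, hy⟩
    refine ⟨Or.inr ⟨he, hy⟩, ?_⟩
    rcases hy with rfl | rfl
    · exact fun hc => csucc_ne_self x hc.symm
    · exact fun hc => cpred_ne_self x hc.symm

private lemma even_le_succ (x : Crown n) (he : Even x.val) : x ≤ x + 1 :=
  Or.inr ⟨he, Or.inl rfl⟩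

private lemma even_le_pred (x : Crown n) (he : Even x.val) : x ≤ x - 1 :=
  Or.inr ⟨he, Or.inr rfl⟩

/-! ### `Q1` facts -/

private lemma q1_le_def (x y : Q1) : x ≤ y ↔ (x = y ∨ (x.lvl = false ∧ y.lvl = true)) := Iff.rfl

private lemma q1_eq_of_le_false {c b : Q1} (h : c ≤ b) (hb : b.lvl = false) : c = b := by
  rcases h with rfl | ⟨h1, h2⟩
  · rfl
  · rw [h2] at hb; cases hb

private lemma q1_eq_of_true_le {a c : Q1} (h : a ≤ c) (ha : a.lvl = true) : c = a := by
  rcases h with rfl | ⟨h1, h2⟩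
  · rfl
  · rw [ha] at h1; cases h1

private lemma q1_lvls_of_lt {a b : Q1} (h : a ≤ b) (hne : a ≠ b) :
    a.lvl = false ∧ b.lvl = true := by
  rcases h with rfl | hl
  · exact absurd rfl hne
  · exact hl

/-! ### The unconstrained invariant `Gm` -/

/-- The crown-cycle invariant, valued in the free `ZMod 2`-module on all pairs. -/
private noncomputable def Gm (u : Crown n → Q1) : (Q1 × Q1) →₀ ZMod 2 :=
  ∑ e : Crown n, if Even e.val then
    (Finsupp.single (u e, u (e + 1)) (1 : ZMod 2) + Finsupp.single (u e, u (e - 1)) 1)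
  else 0

private lemma vadd_self (v : (Q1 × Q1) →₀ ZMod 2) : v + v = 0 := by
  ext t
  have : ∀ z : ZMod 2, z + z = 0 := by decide
  simp [this]

private lemma Gm_congr {u v : Crown n → Q1} (h : ∀ y, u y = v y) : Gm u = Gm v := by
  have : u = v := funext h
  rw [this]

/-- One-point modification at an even point does not change `Gm`. -/
private lemma Gm_step_even (x : Crown n) (hx : Even x.val) (a b : Crown n → Q1)
    (hab : ∀ y, y ≠ x → a y = b y) (hnb : a (x + 1) = a (x - 1)) : Gm a = Gm b := by
  unfold Gm
  refine Finset.sum_congr rfl fun e _ => ?_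
  by_cases he : Even e.val
  · simp only [he, if_true]
    by_cases hex : e = x
    · subst hex
      have h1 : a (e + 1) = b (e + 1) := hab _ (csucc_ne_self e)
      have h2 : a (e - 1) = b (e - 1) := hab _ (cpred_ne_self e)
      have hb : b (e + 1) = b (e - 1) := by rw [← h1, ← h2, hnb]
      rw [hnb, vadd_self, hb, vadd_self]
    · have h1 : e + 1 ≠ x := by
        intro hc
        exact (even_succ_iff e).mp (hc ▸ hx) he
      have h2 : e - 1 ≠ x := by
        intro hc
        exact (even_pred_iff e).mp (hc ▸ hx) he
      rw [hab e hex, hab (e + 1) h1, hab (e - 1) h2]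
  · simp [he]

/-- One-point modification at an odd point whose two (even) neighbours have equal
values does not change `Gm`. -/
private lemma Gm_step_odd (x : Crown n) (hx : ¬ Even x.val) (a b : Crown n → Q1)
    (hab : ∀ y, y ≠ x → a y = b y) (hnb : a (x + 1) = a (x - 1)) : Gm a = Gm b := by
  have key : Gm a + Gm b = 0 := by
    unfold Gm
    rw [← Finset.sum_add_distrib]
    have hz : ∀ e ∈ (Finset.univ : Finset (Crown n)), e ∉ ({x - 1, x + 1} : Finset (Crown n)) →
        ((if Even e.val then
            (Finsupp.single (a e, a (e + 1)) (1 : ZMod 2) + Finsupp.single (a e, a (e - 1)) 1)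
          else 0) +
         (if Even e.val then
            (Finsupp.single (b e, b (e + 1)) (1 : ZMod 2) + Finsupp.single (b e, b (e - 1)) 1)
          else 0)) = 0 := by
      intro e _ hmem
      simp only [Finset.mem_insert, Finset.mem_singleton, not_or] at hmem
      by_cases he : Even e.val
      · have hex : e ≠ x := fun hc => hx (hc ▸ he)
        have h1 : e + 1 ≠ x := by
          intro hc
          exact hmem.1 (by rw [← hc]; ring)
        have h2 : e - 1 ≠ x := by
          intro hc
          exact hmem.2 (by rw [← hc]; ring)
        simp only [he, if_true]
        rw [hab e hex, hab (e + 1) h1, hab (e - 1) h2, vadd_self]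
      · simp [he]
    rw [← Finset.sum_subset (Finset.subset_univ ({x - 1, x + 1} : Finset (Crown n))) hz]
    have hne : x - 1 ≠ x + 1 := fun hc => (succ_ne_pred x) hc.symm
    rw [Finset.sum_pair hne]
    have he1 : Even (x - 1).val := (even_pred_iff x).mpr hx
    have he2 : Even (x + 1).val := (even_succ_iff x).mpr hx
    have e1 : x - 1 + 1 = x := by ring
    have e2 : x - 1 - 1 = x - 2 := by ring
    have e3 : x + 1 + 1 = x + 2 := by ring
    have e4 : x + 1 - 1 = x := by ring
    have hb1 : b (x - 1) = a (x - 1) := (hab _ (cpred_ne_self x)).symm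
    have hb2 : b (x + 1) = a (x + 1) := (hab _ (csucc_ne_self x)).symm
    have hb3 : b (x - 2) = a (x - 2) := (hab _ (sub_two_ne_self x)).symm
    have hb4 : b (x + 2) = a (x + 2) := (hab _ (add_two_ne_self x)).symm
    simp only [he1, he2, if_true, e1, e2, e3, e4, hb1, hb2, hb3, hb4, hnb]
    -- now a sum of eight singles, pairing up
    have rearr :
        (Finsupp.single (a (x - 1), a x) (1 : ZMod 2) + Finsupp.single (a (x - 1), a (x - 2)) 1 +
          (Finsupp.single (a (x - 1), b x) 1 + Finsupp.single (a (x - 1), a (x - 2)) 1)) +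
        (Finsupp.single (a (x - 1), a (x + 2)) 1 + Finsupp.single (a (x - 1), a x) 1 +
          (Finsupp.single (a (x - 1), a (x + 2)) 1 + Finsupp.single (a (x - 1), b x) 1)) =
        (Finsupp.single (a (x - 1), a x) (1 : ZMod 2) + Finsupp.single (a (x - 1), a x) 1) +
        ((Finsupp.single (a (x - 1), a (x - 2)) 1 + Finsupp.single (a (x - 1), a (x - 2)) 1) +
         ((Finsupp.single (a (x - 1), b x) 1 + Finsupp.single (a (x - 1), b x) 1) +
          (Finsupp.single (a (x - 1), a (x + 2)) 1 + Finsupp.single (a (x - 1), a (x + 2)) 1))) := by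
      abel
    rw [rearr, vadd_self, vadd_self, vadd_self, vadd_self]
    simp
  calc Gm a = Gm a + (Gm b + Gm b) := by rw [vadd_self]; simp
  _ = (Gm a + Gm b) + Gm b := by abel
  _ = Gm b := by rw [key]; simp

/-- Stage 1: lifting any set of odd points from `u` to `v` keeps `Gm` unchanged. -/
private lemma Gm_stage1 (u v : Crown n → Q1) (hu : Monotone u) (huv : ∀ x, u x ≤ v x)
    (S : Finset (Crown n)) (hS : ∀ x ∈ S, ¬ Even x.val) :
    Gm (fun y => if y ∈ S then v y else u y) = Gm u := by
  classical
  induction S using Finset.induction_on with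
  | empty => exact Gm_congr (by intro y; simp)
  | @insert x S hxS ih =>
    have hxodd : ¬ Even x.val := hS x (Finset.mem_insert_self x S)
    have hS' : ∀ y ∈ S, ¬ Even y.val := fun y hy => hS y (Finset.mem_insert_of_mem hy)
    set a : Crown n → Q1 := fun y => if y ∈ S then v y else u y with ha
    set b : Crown n → Q1 := fun y => if y ∈ insert x S then v y else u y with hb
    have hab : ∀ y, y ≠ x → a y = b y := by
      intro y hy
      simp only [ha, hb, Finset.mem_insert]
      by_cases h : y ∈ S <;> simp [h, hy]
    have haxp : a (x + 1) = u (x + 1) := by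
      have : x + 1 ∉ S := fun hc => hS' _ hc ((even_succ_iff x).mpr hxodd)
      simp [ha, this]
    have haxm : a (x - 1) = u (x - 1) := by
      have : x - 1 ∉ S := fun hc => hS' _ hc ((even_pred_iff x).mpr hxodd)
      simp [ha, this]
    have hax : a x = u x := by simp [ha, hxS]
    by_cases hch : u x = v x
    · have : ∀ y, a y = b y := by
        intro y
        by_cases hy : y = x
        · subst hy; simp [ha, hb, hxS, hch]
        · exact hab y hy
      rw [← Gm_congr this]
      exact ih hS'
    · have hlv : (u x).lvl = false := (q1_lvls_of_lt (huv x) hch).1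
      have hn1 : u (x + 1) = u x := by
        have hle : u (x + 1) ≤ u x := by
          have : (x + 1 : Crown n) ≤ (x + 1) - 1 :=
            even_le_pred _ ((even_succ_iff x).mpr hxodd)
          have e : (x + 1 : Crown n) - 1 = x := by ring
          rw [e] at this
          exact hu this
        exact q1_eq_of_le_false hle hlv
      have hn2 : u (x - 1) = u x := by
        have hle : u (x - 1) ≤ u x := by
          have : (x - 1 : Crown n) ≤ (x - 1) + 1 :=
            even_le_succ _ ((even_pred_iff x).mpr hxodd)
          have e : (x - 1 : Crown n) + 1 = x := by ring
          rw [e] at this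
          exact hu this
        exact q1_eq_of_le_false hle hlv
      have hnb : a (x + 1) = a (x - 1) := by rw [haxp, haxm, hn1, hn2]
      rw [← Gm_step_odd x hxodd a b hab hnb]
      exact ih hS'

/-- Stage 2: lifting any set of even points from `u` to `v`, when `u` and `v` already
agree on odd points, keeps `Gm` unchanged. -/
private lemma Gm_stage2 (u v : Crown n → Q1) (hv : Monotone v) (huv : ∀ x, u x ≤ v x)
    (hodd : ∀ y, ¬ Even y.val → u y = v y)
    (S : Finset (Crown n)) (hS : ∀ x ∈ S, Even x.val) :
    Gm (fun y => if y ∈ S then v y else u y) = Gm u := by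
  classical
  induction S using Finset.induction_on with
  | empty => exact Gm_congr (by intro y; simp)
  | @insert x S hxS ih =>
    have hxev : Even x.val := hS x (Finset.mem_insert_self x S)
    have hS' : ∀ y ∈ S, Even y.val := fun y hy => hS y (Finset.mem_insert_of_mem hy)
    set a : Crown n → Q1 := fun y => if y ∈ S then v y else u y with ha
    set b : Crown n → Q1 := fun y => if y ∈ insert x S then v y else u y with hb
    have hab : ∀ y, y ≠ x → a y = b y := by
      intro y hy
      simp only [ha, hb, Finset.mem_insert]
      by_cases h : y ∈ S <;> simp [h, hy]
    have hop : ¬ Even (x + 1).val := by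
      intro hc
      exact ((even_succ_iff x).mp hc) hxev
    have hom : ¬ Even (x - 1).val := by
      intro hc
      exact ((even_pred_iff x).mp hc) hxev
    have haxp : a (x + 1) = v (x + 1) := by
      have h1 : x + 1 ∉ S := fun hc => hop (hS' _ hc)
      simp [ha, h1, hodd _ hop]
    have haxm : a (x - 1) = v (x - 1) := by
      have h1 : x - 1 ∉ S := fun hc => hom (hS' _ hc)
      simp [ha, h1, hodd _ hom]
    by_cases hch : u x = v x
    · have : ∀ y, a y = b y := by
        intro y
        by_cases hy : y = x
        · subst hy; simp [ha, hb, hxS, hch]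
        · exact hab y hy
      rw [← Gm_congr this]
      exact ih hS'
    · have hlv : (v x).lvl = true := (q1_lvls_of_lt (huv x) hch).2
      have hn1 : v (x + 1) = v x := by
        have hle : v x ≤ v (x + 1) := hv (even_le_succ x hxev)
        exact q1_eq_of_true_le hle hlv
      have hn2 : v (x - 1) = v x := by
        have hle : v x ≤ v (x - 1) := hv (even_le_pred x hxev)
        exact q1_eq_of_true_le hle hlv
      have hnb : a (x + 1) = a (x - 1) := by rw [haxp, haxm, hn1, hn2]
      rw [← Gm_step_even x hxev a b hab hnb]
      exact ih hS'

/-- Pointwise comparable monotone maps to `Q1` have equal invariants. -/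
private lemma Gm_comparable (u v : Crown n → Q1) (hu : Monotone u) (hv : Monotone v)
    (huv : ∀ x, u x ≤ v x) : Gm u = Gm v := by
  classical
  set m : Crown n → Q1 := fun y => if Even y.val then u y else v y with hm
  have h1 : Gm m = Gm u := by
    have := Gm_stage1 u v hu huv (Finset.univ.filter fun y => ¬ Even y.val)
      (fun x hx => (Finset.mem_filter.mp hx).2)
    rw [← this]
    refine Gm_congr fun y => ?_
    simp only [hm, Finset.mem_filter, Finset.mem_univ, true_and]
    by_cases hy : Even y.val <;> simp [hy]
  have h2 : Gm m = Gm v := by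
    have hmv : ∀ x, m x ≤ v x := by
      intro x
      by_cases hx : Even x.val <;> simp [hm, hx, huv x]
    have hmodd : ∀ y, ¬ Even y.val → m y = v y := by
      intro y hy; simp [hm, hy]
    have := Gm_stage2 m v hv hmv hmodd (Finset.univ.filter fun y => Even y.val)
      (fun x hx => (Finset.mem_filter.mp hx).2)
    rw [← this]
    refine Gm_congr fun y => ?_
    simp only [hm, Finset.mem_filter, Finset.mem_univ, true_and]
    by_cases hy : Even y.val <;> simp [hy]
  rw [← h1, h2]

/-- A monotone map into a dismantlable subposet can be pushed into the target
subposet without changing the composed invariant. -/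
private lemma Gm_reduces {Q : Type} [PartialOrder Q] (h : Q → Q1) (hh : Monotone h)
    {S T : Set Q} (hr : Reduces S T) :
    ∀ g : Crown n → Q, Monotone g → (∀ y, g y ∈ S) →
      ∃ g' : Crown n → Q, Monotone g' ∧ (∀ y, g' y ∈ T) ∧ Gm (h ∘ g) = Gm (h ∘ g') := by
  classical
  induction hr with
  | refl S => exact fun g hg hgS => ⟨g, hg, hgS, rfl⟩
  | @step S T p q hdom hr ih =>
    intro g hg hgS
    obtain ⟨hpS, hqS, hpq, hcomp, hdm⟩ := hdom
    set g₁ : Crown n → Q := fun y => if g y = p then q else g y with hg₁def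
    have hg₁ : Monotone g₁ := by
      intro x y hxy
      have hgle : g x ≤ g y := hg hxy
      by_cases hx : g x = p <;> by_cases hy : g y = p
      · simp [hg₁def, hx, hy]
      · simp only [hg₁def, hx, hy, if_true, if_false]
        have hlt : p < g y := lt_of_le_of_ne (hx ▸ hgle) (fun hc => hy hc.symm)
        by_cases hyq : g y = q
        · rw [hyq]
        · exact le_of_lt ((hdm (g y) (hgS y) hy hyq).2 hlt)
      · simp only [hg₁def, hx, hy, if_true, if_false]
        have hlt : g x < p := lt_of_le_of_ne (hy ▸ hgle) hx
        by_cases hxq : g x = q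
        · rw [hxq]
        · exact le_of_lt ((hdm (g x) (hgS x) hx hxq).1 hlt)
      · simpa [hg₁def, hx, hy] using hgle
    have hg₁S : ∀ y, g₁ y ∈ S \ {p} := by
      intro y
      by_cases hy : g y = p
      · simp only [hg₁def, hy, if_true]
        exact ⟨hqS, fun hc => hpq (hc : q = p).symm⟩
      · simp only [hg₁def, hy, if_false]
        exact ⟨hgS y, hy⟩
    have hGeq : Gm (h ∘ g) = Gm (h ∘ g₁) := by
      rcases hcomp with hle | hle
      · refine Gm_comparable _ _ (hh.comp hg) (hh.comp hg₁) fun x => ?_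
        by_cases hx : g x = p
        · simp only [Function.comp_apply, hg₁def, hx, if_true]
          exact hh hle
        · simp [Function.comp_apply, hg₁def, hx]
      · refine (Gm_comparable _ _ (hh.comp hg₁) (hh.comp hg) fun x => ?_).symm
        by_cases hx : g x = p
        · simp only [Function.comp_apply, hg₁def, hx, if_true]
          exact hh hle
        · simp [Function.comp_apply, hg₁def, hx]
    obtain ⟨g', hg', hg'T, hG⟩ := ih g₁ hg₁ hg₁S
    exact ⟨g', hg', hg'T, hGeq.trans hG⟩

/-- The invariant of a constant map is zero. -/
private lemma Gm_const (c : Q1) : Gm (n := n) (fun _ => c) = 0 := by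
  unfold Gm
  refine Finset.sum_eq_zero fun e _ => ?_
  by_cases he : Even e.val
  · simp only [he, if_true]
    exact vadd_self _
  · simp [he]

/-- Translation: `Gm` computes the pushforward of `f̂(soi)`. -/
private lemma fhat_soi_eq_Gm (f : Crown n → Q1) (hf : Monotone f) :
    Finsupp.mapDomain (Subtype.val) (fhat hf (soi (Crown n))) = Gm f := by
  classical
  letI i : Fintype (OPairs (Crown n)) := Fintype.ofFinite _
  have hsoi : soi (Crown n) =
      ∑ p : OPairs (Crown n), if p.val.1 < p.val.2 then Finsupp.single p 1 else 0 := by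
    rw [soi]
  set L : VS (Crown n) →ₗ[ZMod 2] ((Q1 × Q1) →₀ ZMod 2) :=
    (Finsupp.lmapDomain (ZMod 2) (ZMod 2) (Subtype.val : OPairs Q1 → Q1 × Q1)).comp
      (fhat hf) with hL
  have hLHS : Finsupp.mapDomain (Subtype.val) (fhat hf (soi (Crown n))) = L (soi (Crown n)) := rfl
  rw [hLHS, hsoi, map_sum]
  have hterm : ∀ p : OPairs (Crown n),
      L (if p.val.1 < p.val.2 then Finsupp.single p 1 else 0) =
        (if p.val.1 < p.val.2 then Finsupp.single (f p.val.1, f p.val.2) (1 : ZMod 2) else 0) := by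
    intro p
    split_ifs with hlt
    · simp only [hL, LinearMap.comp_apply, fhat, Finsupp.lmapDomain_apply,
        Finsupp.mapDomain_single]
    · simp
  rw [Finset.sum_congr rfl fun p _ => hterm p]
  -- now reindex the sum over OPairs as a sum over all pairs
  have hsub : (∑ p : OPairs (Crown n),
      if p.val.1 < p.val.2 then Finsupp.single (f p.val.1, f p.val.2) (1 : ZMod 2) else 0) =
      ∑ q : Crown n × Crown n,
        if q.1 < q.2 then Finsupp.single (f q.1, f q.2) (1 : ZMod 2) else 0 := by
    rw [← Finset.sum_subtype (Finset.univ.filter fun q : Crown n × Crown n => q.1 ≤ q.2)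
      (by intro q; simp) (fun q => if q.1 < q.2 then Finsupp.single (f q.1, f q.2) (1 : ZMod 2) else 0)]
    refine Finset.sum_filter_of_ne fun q _ hne => ?_
    by_contra hle
    rw [if_neg (fun hlt => hle (le_of_lt hlt))] at hne
    exact hne rfl
  rw [hsub, Fintype.sum_prod_type]
  unfold Gm
  refine Finset.sum_congr rfl fun e _ => ?_
  by_cases he : Even e.val
  · have hlt : ∀ y : Crown n, e < y ↔ (y = e + 1 ∨ y = e - 1) := by
      intro y
      rw [crown_lt_iff]
      simp [he]
    have hzero : ∀ y ∈ (Finset.univ : Finset (Crown n)),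
        y ∉ ({e + 1, e - 1} : Finset (Crown n)) →
        (if e < y then Finsupp.single (f e, f y) (1 : ZMod 2) else 0) = 0 := by
      intro y _ hmem
      simp only [Finset.mem_insert, Finset.mem_singleton, not_or] at hmem
      rw [if_neg]
      rw [hlt y]
      tauto
    rw [← Finset.sum_subset (Finset.subset_univ ({e + 1, e - 1} : Finset (Crown n))) hzero,
      Finset.sum_pair (succ_ne_pred e)]
    rw [if_pos ((hlt (e + 1)).mpr (Or.inl rfl)), if_pos ((hlt (e - 1)).mpr (Or.inr rfl))]
    simp [he]
  · have : ∀ y : Crown n, ¬ (e < y) := by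
      intro y hc
      exact he ((crown_lt_iff e y).mp hc).1
    simp [he, this]

end Aux

/-- If `P` is the `Z₂`-crown of order `n ≥ 1`, `Q` is a finite
dismantlable poset and `f = h ∘ g : P → Q₁` is order-preserving, factoring through `Q`,
then `f̂(soi(P)) = 0`. -/
theorem crown_map_through_dismantlable_soi_zero (n : ℕ) [NeZero n]
    (Q : Type) [PartialOrder Q] [Finite Q] (hQ : Dismantlable Q)
    (g : Crown n → Q) (h : Q → Q1) (hg : Monotone g) (hh : Monotone h) :
    fhat (hh.comp hg) (soi (Crown n)) = 0 := by
  classical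
  obtain ⟨x₀, hred⟩ := hQ
  obtain ⟨g', hg', hg'T, hG⟩ :=
    Gm_reduces h hh hred g hg (fun y => Set.mem_univ _)
  have hg'const : ∀ y, g' y = x₀ := fun y => hg'T y
  have hconst : (h ∘ g') = fun _ => h x₀ := by
    funext y; simp [hg'const y]
  have hzero : Gm (h ∘ g) = 0 := by
    rw [hG, hconst, Gm_const]
  have := fhat_soi_eq_Gm (h ∘ g) (hh.comp hg)
  rw [hzero] at this
  have hinj : Function.Injective
      (Finsupp.mapDomain (Subtype.val : OPairs Q1 → Q1 × Q1) :
        VS Q1 → (Q1 × Q1) →₀ ZMod 2) :=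
    Finsupp.mapDomain_injective Subtype.val_injective
  have h0 : Finsupp.mapDomain (Subtype.val : OPairs Q1 → Q1 × Q1) (0 : VS Q1) = 0 :=
    Finsupp.mapDomain_zero
  exact hinj (this.trans h0.symm)
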